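/- arXiv:2207.09495 — 5 statements merged into one kernel-verified Lean document; each statement's English description precedes it below -/
import Mathlib

section
/- Let G be a finite group and N a subgroup of G. If the sum, taken over all conjugacy classes C of G consisting of elements of prime order, of the rational numbers |C ∩ N|² / |C| is strictly less than 1, then there exists x ∈ G such that N ∩ N^x is the trivial subgroup. -/
/-- The conjugate subgroup `N^x = x⁻¹ N x`. -/
def conjSubgroup {G : Type*} [Group G] (N : Subgroup G) (x : G) : Subgroup G :=
  N.map (MulAut.conj x⁻¹).toMonoidHom

lemma mem_conjSubgroup {G : Type*} [Group G] (N : Subgroup G) (x g : G) :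
    g ∈ conjSubgroup N x ↔ x * g * x⁻¹ ∈ N := by
  constructor
  · rintro ⟨n, hn, rfl⟩
    simpa [mul_assoc] using hn
  · intro hg
    refine ⟨x * g * x⁻¹, hg, ?_⟩
    simp only [MulEquiv.coe_toMonoidHom, MulAut.conj_apply]
    group

lemma exists_prime_order_of_ne_bot {G : Type*} [Group G] [Finite G] {H : Subgroup G}
    (hH : H ≠ ⊥) : ∃ g ∈ H, (orderOf g).Prime := by
  have : Nontrivial H := (Subgroup.nontrivial_iff_ne_bot H).2 hH
  cases nonempty_fintype H
  have h1 : Fintype.card H ≠ 1 := Fintype.one_lt_card.ne'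
  obtain ⟨p, hp, hpd⟩ := Nat.exists_prime_and_dvd h1
  haveI : Fact p.Prime := ⟨hp⟩
  obtain ⟨g, hg⟩ := exists_prime_orderOf_dvd_card (G := H) p hpd
  refine ⟨(g : G), g.2, ?_⟩
  rw [show ((g : G)) = H.subtype g from rfl,
    orderOf_injective H.subtype H.subtype_injective g, hg]
  exact hp

/-- If `G` is a finite group, `N ≤ G`, and the sum over the conjugacy classes `C` of `G`
consisting of elements of prime order of `|C ∩ N|² / |C|` is less than `1`, then
`N ∩ N^x = 1` for some `x ∈ G`. -/
theorem stmt0 {G : Type*} [Group G] [Finite G] (N : Subgroup G)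
    (h : (∑ᶠ C ∈ {C : ConjClasses G | ∀ g ∈ C.carrier, (orderOf g).Prime},
        ((Nat.card (C.carrier ∩ (N : Set G) : Set G) : ℚ)) ^ 2 /
          (Nat.card C.carrier : ℚ)) < 1) :
    ∃ x : G, N ⊓ conjSubgroup N x = ⊥ := by
  classical
  cases nonempty_fintype G
  by_contra hcon
  push_neg at hcon
  set S : Set (ConjClasses G) := {C : ConjClasses G | ∀ g ∈ C.carrier, (orderOf g).Prime} with hS
  set P : Finset G := Finset.univ.filter fun g => (orderOf g).Prime ∧ g ∈ N with hP
  set T : G → Finset G := fun g => Finset.univ.filter fun x => x * g * x⁻¹ ∈ N with hT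
  -- Step 1: every `x` lies in some `T g` with `g ∈ P`
  have step1 : Fintype.card G ≤ ∑ g ∈ P, (T g).card := by
    have hsub : (Finset.univ : Finset G) ⊆ P.biUnion T := by
      intro x _
      obtain ⟨g, hgmem, hgp⟩ := exists_prime_order_of_ne_bot (hcon x)
      rw [Subgroup.mem_inf, mem_conjSubgroup] at hgmem
      refine Finset.mem_biUnion.2 ⟨g, ?_, ?_⟩
      · simp [hP, hgp, hgmem.1]
      · simp [hT, hgmem.2]
    calc Fintype.card G = (Finset.univ : Finset G).card := (Finset.card_univ).symm
      _ ≤ (P.biUnion T).card := Finset.card_le_card hsub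
      _ ≤ ∑ g ∈ P, (T g).card := Finset.card_biUnion_le
  -- fiber count
  have fiber : ∀ g h : G, IsConj g h →
      (Finset.univ.filter fun x => x * g * x⁻¹ = h).card =
      (Finset.univ.filter fun z => z * g * z⁻¹ = g).card := by
    intro g h hconj
    obtain ⟨x₀, hx₀⟩ := isConj_iff.1 hconj
    apply Finset.card_bij (fun x _ => x₀⁻¹ * x)
    · intro x hx
      simp only [Finset.mem_filter, Finset.mem_univ, true_and] at hx ⊢
      have : x * g * x⁻¹ = x₀ * g * x₀⁻¹ := by rw [hx, hx₀]
      calc x₀⁻¹ * x * g * (x₀⁻¹ * x)⁻¹ = x₀⁻¹ * (x * g * x⁻¹) * x₀ := by group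
        _ = g := by rw [this]; group
    · intro a _ b _ hab
      exact mul_left_cancel hab
    · intro z hz
      simp only [Finset.mem_filter, Finset.mem_univ, true_and] at hz
      refine ⟨x₀ * z, ?_, by group⟩
      simp only [Finset.mem_filter, Finset.mem_univ, true_and]
      calc x₀ * z * g * (x₀ * z)⁻¹ = x₀ * (z * g * z⁻¹) * x₀⁻¹ := by group
        _ = h := by rw [hz, hx₀]
  set Cfin : G → Finset G := fun g => Finset.univ.filter fun h => IsConj g h with hCfin
  set Zc : G → ℕ := fun g => (Finset.univ.filter fun z => z * g * z⁻¹ = g).card with hZc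
  have L2 : ∀ g : G, Fintype.card G = (Cfin g).card * Zc g := by
    intro g
    have hsummand : ∀ h ∈ Cfin g,
        (Finset.univ.filter fun x => x * g * x⁻¹ = h).card = Zc g := by
      intro h hh
      simp only [hCfin, Finset.mem_filter, Finset.mem_univ, true_and] at hh
      exact fiber g h hh
    rw [← Finset.card_univ,
      Finset.card_eq_sum_card_fiberwise (f := fun x => x * g * x⁻¹) (t := Cfin g)
        (fun x _ => by
          simp only [hCfin, Finset.mem_coe, Finset.mem_filter, Finset.mem_univ, true_and]
          exact isConj_iff.2 ⟨x, rfl⟩),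
      Finset.sum_congr rfl hsummand, Finset.sum_const, smul_eq_mul]
  have L3 : ∀ g : G, g ∈ P → (T g).card = ((Cfin g).filter fun h => h ∈ N).card * Zc g := by
    intro g _
    have hsummand : ∀ h ∈ (Cfin g).filter fun h => h ∈ N,
        ((T g).filter fun x => x * g * x⁻¹ = h).card = Zc g := by
      intro h hh
      simp only [hCfin, Finset.filter_filter, Finset.mem_filter, Finset.mem_univ,
        true_and] at hh
      have heq : ((T g).filter fun x => x * g * x⁻¹ = h) =
          (Finset.univ.filter fun x => x * g * x⁻¹ = h) := by
        ext x
        simp only [hT, Finset.filter_filter, Finset.mem_filter, Finset.mem_univ, true_and]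
        constructor
        · exact fun hx => hx.2
        · exact fun hx => ⟨hx ▸ hh.2, hx⟩
      rw [heq, fiber g h hh.1]
    rw [Finset.card_eq_sum_card_fiberwise (f := fun x => x * g * x⁻¹)
        (t := (Cfin g).filter fun h => h ∈ N)
        (fun x hx => by
          simp only [hT, Finset.mem_coe, Finset.mem_filter, Finset.mem_univ, true_and] at hx
          simp only [hCfin, Finset.mem_coe, Finset.filter_filter, Finset.mem_filter, Finset.mem_univ, true_and]
          exact ⟨isConj_iff.2 ⟨x, rfl⟩, hx⟩),
      Finset.sum_congr rfl hsummand, Finset.sum_const, smul_eq_mul]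
  -- rational version of the count per g
  have Cfin_ne : ∀ g : G, (0 : ℚ) < (Cfin g).card := by
    intro g
    have : g ∈ Cfin g := by
      simp only [hCfin, Finset.mem_filter, Finset.mem_univ, true_and]
      exact IsConj.refl g
    exact_mod_cast Finset.card_pos.2 ⟨g, this⟩
  have Lq : ∀ g ∈ P, ((T g).card : ℚ) =
      (((Cfin g).filter fun h => h ∈ N).card : ℚ) * (Fintype.card G : ℚ) / ((Cfin g).card : ℚ) := by
    intro g hg
    rw [eq_div_iff (Cfin_ne g).ne']
    rw [L3 g hg]
    push_cast
    rw [L2 g]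
    push_cast
    ring
  -- group the sum by conjugacy classes
  have step2 : (∑ g ∈ P, ((T g).card : ℚ)) =
      ∑ C ∈ (Finset.univ : Finset (ConjClasses G)),
        ∑ g ∈ P.filter fun g => ConjClasses.mk g = C, ((T g).card : ℚ) :=
    (Finset.sum_fiberwise_of_maps_to (fun g _ => Finset.mem_univ _) _).symm
  -- per class value
  have hSfin : S.Finite := Set.toFinite S
  have hkey : ∀ C : ConjClasses G,
      (∑ g ∈ P.filter fun g => ConjClasses.mk g = C, ((T g).card : ℚ)) =
      (if C ∈ S then (Fintype.card G : ℚ) *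
        (((Nat.card (C.carrier ∩ (N : Set G) : Set G) : ℚ)) ^ 2 / (Nat.card C.carrier : ℚ))
       else 0) := by
    intro C
    by_cases hCS : C ∈ S
    · rw [if_pos hCS]
      -- identify the index finset with (carrier ∩ N).toFinset
      have hidx : (P.filter fun g => ConjClasses.mk g = C) =
          (C.carrier ∩ (N : Set G)).toFinset := by
        ext g
        simp only [hP, Finset.filter_filter, Finset.mem_filter, Finset.mem_univ, true_and,
          Set.mem_toFinset, Set.mem_inter_iff, SetLike.mem_coe,
          ← ConjClasses.mem_carrier_iff_mk_eq]
        constructor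
        · rintro ⟨⟨_, h2⟩, h3⟩; exact ⟨h3, h2⟩
        · rintro ⟨h1, h2⟩; exact ⟨⟨hCS g h1, h2⟩, h1⟩
      rw [hidx]
      -- each summand is constant on the class
      have hconst : ∀ g ∈ (C.carrier ∩ (N : Set G)).toFinset, ((T g).card : ℚ) =
          (Fintype.card G : ℚ) * ((Nat.card (C.carrier ∩ (N : Set G) : Set G) : ℚ) /
            (Nat.card C.carrier : ℚ)) := by
        intro g hg
        simp only [Set.mem_toFinset, Set.mem_inter_iff] at hg
        have hgP : g ∈ P := by
          simp only [hP, Finset.mem_filter, Finset.mem_univ, true_and]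
          exact ⟨hCS g hg.1, hg.2⟩
        have hCg : Cfin g = C.carrier.toFinset := by
          ext k
          simp only [hCfin, Finset.mem_filter, Finset.mem_univ, true_and, Set.mem_toFinset,
            ← ConjClasses.mem_carrier_iff_mk_eq]
          rw [← ConjClasses.mem_carrier_iff_mk_eq.1 hg.1, ConjClasses.mem_carrier_iff_mk_eq,
            ConjClasses.mk_eq_mk_iff_isConj]
          exact ⟨fun hc => hc.symm, fun hc => hc.symm⟩
        have hCNg : ((Cfin g).filter fun h => h ∈ N) = (C.carrier ∩ (N : Set G)).toFinset := by
          ext k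
          simp [hCg, Set.mem_toFinset]
        rw [Lq g hgP, hCNg, hCg, Nat.card_coe_set_eq, Nat.card_coe_set_eq,
          Set.ncard_eq_toFinset_card', Set.ncard_eq_toFinset_card']
        ring
      rw [Finset.sum_congr rfl hconst, Finset.sum_const, nsmul_eq_mul,
        Nat.card_coe_set_eq, Set.ncard_eq_toFinset_card']
      ring
    · rw [if_neg hCS]
      apply Finset.sum_eq_zero
      intro g hg
      exfalso
      simp only [hP, Finset.filter_filter, Finset.mem_filter, Finset.mem_univ, true_and] at hg
      apply hCS
      intro k hk
      rw [← hg.2, ConjClasses.mem_carrier_iff_mk_eq, ConjClasses.mk_eq_mk_iff_isConj] at hk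
      obtain ⟨c, hc⟩ := isConj_iff.1 hk.symm
      rw [← hc, show c * g * c⁻¹ = (MulAut.conj c) g from rfl,
        MulEquiv.orderOf_eq (MulAut.conj c) g]
      exact hg.1.1
  -- combine
  have hsum : (∑ g ∈ P, ((T g).card : ℚ)) = (Fintype.card G : ℚ) *
      ∑ᶠ C ∈ S, ((Nat.card (C.carrier ∩ (N : Set G) : Set G) : ℚ)) ^ 2 /
        (Nat.card C.carrier : ℚ) := by
    rw [step2, Finset.sum_congr rfl fun C _ => hkey C, ← Finset.sum_filter,
      finsum_mem_eq_finite_toFinset_sum _ hSfin, Finset.mul_sum]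
    refine Finset.sum_congr ?_ fun _ _ => rfl
    ext C
    simp [hS]
  have hlt : (∑ g ∈ P, ((T g).card : ℚ)) < (Fintype.card G : ℚ) := by
    rw [hsum]
    have hpos : (0 : ℚ) < (Fintype.card G : ℚ) := by
      exact_mod_cast Fintype.card_pos
    calc (Fintype.card G : ℚ) * _ < (Fintype.card G : ℚ) * 1 := by
          exact mul_lt_mul_of_pos_left h hpos
      _ = (Fintype.card G : ℚ) := mul_one _
  have hge : (Fintype.card G : ℚ) ≤ ∑ g ∈ P, ((T g).card : ℚ) := by
    exact_mod_cast step1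
  exact absurd (lt_of_le_of_lt hge hlt) (lt_irrefl _)
end

section
/- Let G be a finite group, N a subgroup of G, and c ≥ 1 an integer. Then the number of c-tuples (x₁N, …, x_cN) of left cosets in G/N such that the intersection x₁Nx₁⁻¹ ∩ ⋯ ∩ x_cNx_c⁻¹ is a nontrivial subgroup is at most |G : N|^c multiplied by the sum, over all conjugacy classes C of G consisting of elements of prime order, of the rational numbers |C ∩ N|^c / |C|^(c-1). -/
open Classical

section Aux

variable {G : Type*} [Group G]

private lemma memmap (N : Subgroup G) (x g : G) :
    g ∈ N.map (MulAut.conj x).toMonoidHom ↔ x⁻¹ * g * x ∈ N := by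
  simp only [Subgroup.mem_map, MulEquiv.coe_toMonoidHom, MulAut.conj_apply]
  constructor
  · rintro ⟨n, hn, rfl⟩; group; simpa using hn
  · intro h; exact ⟨x⁻¹ * g * x, h, by group⟩

private lemma fibercount [Finite G] (g : G) (S : Set G) (hS : ∀ h ∈ S, IsConj g h) :
    Nat.card {x : G // x * g * x⁻¹ ∈ S} =
      Nat.card S * Nat.card {z : G // z * g * z⁻¹ = g} := by
  have e1 : {x : G // x * g * x⁻¹ ∈ S} ≃ Σ h : S, {x : {x : G // x * g * x⁻¹ ∈ S} //
      (x : G) * g * (x : G)⁻¹ = (h : G)} :=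
    (Equiv.sigmaFiberEquiv (fun x : {x : G // x * g * x⁻¹ ∈ S} =>
      (⟨(x : G) * g * (x : G)⁻¹, x.2⟩ : S))).symm.trans
      (Equiv.sigmaCongrRight fun h => Equiv.subtypeEquivRight fun x => by
        constructor
        · intro hx; exact congrArg Subtype.val hx
        · intro hx; exact Subtype.ext hx)
  have e2 : ∀ h : S, {x : {x : G // x * g * x⁻¹ ∈ S} // (x : G) * g * (x : G)⁻¹ = (h : G)}
      ≃ {z : G // z * g * z⁻¹ = g} := by
    intro h
    have hcj := isConj_iff.mp (hS h h.2)
    set x₀ := hcj.choose with hx₀def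
    have hx₀ : x₀ * g * x₀⁻¹ = (h : G) := hcj.choose_spec
    refine ⟨fun x => ⟨x₀⁻¹ * x.1.1, ?_⟩, fun z => ⟨⟨x₀ * z.1, ?_⟩, ?_⟩, ?_, ?_⟩
    · have := x.2
      calc x₀⁻¹ * ↑↑x * g * (x₀⁻¹ * ↑↑x)⁻¹ = x₀⁻¹ * (↑↑x * g * (↑↑x)⁻¹) * x₀ := by group
      _ = x₀⁻¹ * ↑h * x₀ := by rw [this]
      _ = g := by rw [← hx₀]; group
    · have := z.2
      have : x₀ * ↑z * g * (x₀ * ↑z)⁻¹ = (h : G) := by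
        calc x₀ * ↑z * g * (x₀ * ↑z)⁻¹ = x₀ * (↑z * g * (↑z)⁻¹) * x₀⁻¹ := by group
        _ = x₀ * g * x₀⁻¹ := by rw [this]
        _ = _ := hx₀
      rw [this]; exact h.2
    · show x₀ * ↑z * g * (x₀ * ↑z)⁻¹ = (h : G)
      calc x₀ * ↑z * g * (x₀ * ↑z)⁻¹ = x₀ * (↑z * g * (↑z)⁻¹) * x₀⁻¹ := by group
      _ = x₀ * g * x₀⁻¹ := by rw [z.2]
      _ = _ := hx₀
    · intro x; ext; show x₀ * (x₀⁻¹ * ↑↑x) = ↑↑x; group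
    · intro z; ext; show x₀⁻¹ * (x₀ * ↑z) = ↑z; group
  calc Nat.card {x : G // x * g * x⁻¹ ∈ S} = Nat.card (Σ h : S, _) := Nat.card_congr e1
  _ = Nat.card (S × {z : G // z * g * z⁻¹ = g}) := Nat.card_congr
      ((Equiv.sigmaCongrRight e2).trans (Equiv.sigmaEquivProd _ _))
  _ = _ := Nat.card_prod _ _

private lemma outmem (N : Subgroup G) (x : G) : ((QuotientGroup.mk x : G ⧸ N).out)⁻¹ * x ∈ N :=
  QuotientGroup.eq.mp (QuotientGroup.out_eq' _)

private noncomputable def cosetEquiv (N : Subgroup G) (g : G) :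
    {x : G // x⁻¹ * g * x ∈ N} ≃ {q : G ⧸ N // (q.out)⁻¹ * g * q.out ∈ N} × N where
  toFun x := (⟨QuotientGroup.mk x.1, by
      have hn := outmem N x.1
      have hx := x.2
      set o := (QuotientGroup.mk x.1 : G ⧸ N).out with ho
      have key : o⁻¹ * g * o = (o⁻¹ * x.1) * (x.1⁻¹ * g * x.1) * (o⁻¹ * x.1)⁻¹ := by group
      rw [key]; exact N.mul_mem (N.mul_mem hn hx) (N.inv_mem hn)⟩,
    ⟨((QuotientGroup.mk x.1 : G ⧸ N).out)⁻¹ * x.1, outmem N x.1⟩)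
  invFun p := ⟨p.1.1.out * p.2.1, by
      have hq := p.1.2
      have hn := p.2.2
      set o := p.1.1.out
      have key : (o * p.2.1)⁻¹ * g * (o * p.2.1) =
          (p.2.1 : G)⁻¹ * (o⁻¹ * g * o) * p.2.1 := by group
      rw [key]; exact N.mul_mem (N.mul_mem (N.inv_mem hn) hq) hn⟩
  left_inv x := by ext; show _ * (_⁻¹ * x.1) = x.1; group
  right_inv p := by
    obtain ⟨⟨q, hq'⟩, n⟩ := p
    have hq : (QuotientGroup.mk (q.out * n.1) : G ⧸ N) = q := by
      conv_rhs => rw [← QuotientGroup.out_eq' q]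
      exact QuotientGroup.eq.mpr (by simpa using N.inv_mem n.2)
    refine Prod.ext (Subtype.ext hq) (Subtype.ext ?_)
    show ((QuotientGroup.mk (q.out * n.1) : G ⧸ N).out)⁻¹ * (q.out * n.1) = n.1
    rw [hq]; group

private lemma exists_prime_order [Finite G] (H : Subgroup G) (h : H ≠ ⊥) :
    ∃ g ∈ H, (orderOf g).Prime := by
  have h1 : Nat.card H ≠ 1 := fun hc => h (Subgroup.card_eq_one.mp hc)
  obtain ⟨p, hp, hdvd⟩ := Nat.exists_prime_and_dvd h1
  haveI : Fact p.Prime := ⟨hp⟩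
  haveI : Fintype H := Fintype.ofFinite H
  obtain ⟨x, hx⟩ := exists_prime_orderOf_dvd_card (G := H) p
    (by rwa [← Nat.card_eq_fintype_card])
  exact ⟨x, x.2, by rw [Subgroup.orderOf_coe, hx]; exact hp⟩

private lemma prime_class [Finite G] {g h : G} (hg : (orderOf g).Prime)
    (hh : h ∈ (ConjClasses.mk g).carrier) : (orderOf h).Prime := by
  rw [ConjClasses.mem_carrier_iff_mk_eq, ConjClasses.mk_eq_mk_iff_isConj] at hh
  obtain ⟨c₀, hc₀⟩ := isConj_iff.mp hh.symm
  have : orderOf (c₀ * g * c₀⁻¹) = orderOf g := by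
    have := orderOf_injective (MulAut.conj c₀).toMonoidHom (MulAut.conj c₀).injective g
    simpa [MulAut.conj_apply] using this
  rw [hc₀] at this
  rwa [this]

private lemma qcard_eq [Finite G] (N : Subgroup G) (g : G) :
    (Nat.card {q : G ⧸ N // g ∈ N.map (MulAut.conj q.out).toMonoidHom} : ℚ) =
      (N.index : ℚ) * (Nat.card ((ConjClasses.mk g).carrier ∩ (N : Set G) : Set G) : ℚ) /
        (Nat.card (ConjClasses.mk g).carrier : ℚ) := by
  set S₀ : Set G := {h | IsConj g h} with hS₀
  have hcar : (ConjClasses.mk g).carrier = S₀ := by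
    ext h
    rw [ConjClasses.mem_carrier_iff_mk_eq, ConjClasses.mk_eq_mk_iff_isConj]
    exact ⟨fun hh => hh.symm, fun hh => hh.symm⟩
  set m := Nat.card {z : G // z * g * z⁻¹ = g} with hm
  set k := Nat.card ((ConjClasses.mk g).carrier ∩ (N : Set G) : Set G) with hk
  set QC := Nat.card {q : G ⧸ N // g ∈ N.map (MulAut.conj q.out).toMonoidHom} with hQC
  -- QC * card N = k * m
  have step1 : QC * Nat.card N = k * m := by
    have e0 : {q : G ⧸ N // g ∈ N.map (MulAut.conj q.out).toMonoidHom} ≃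
        {q : G ⧸ N // (q.out)⁻¹ * g * q.out ∈ N} :=
      Equiv.subtypeEquivRight fun q => memmap N q.out g
    have e1 : Nat.card {x : G // x⁻¹ * g * x ∈ N} = QC * Nat.card N := by
      rw [hQC, Nat.card_congr (cosetEquiv N g), Nat.card_prod, Nat.card_congr e0]
    have e2 : {x : G // x⁻¹ * g * x ∈ N} ≃ {y : G // y * g * y⁻¹ ∈ N} :=
      Equiv.subtypeEquiv (Equiv.inv G) (fun a => by simp)
    have e3 : {y : G // y * g * y⁻¹ ∈ N} ≃
        {y : G // y * g * y⁻¹ ∈ ((N : Set G) ∩ S₀ : Set G)} :=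
      Equiv.subtypeEquivRight fun y =>
        ⟨fun hy => ⟨hy, isConj_iff.mpr ⟨y, rfl⟩⟩, fun hy => hy.1⟩
    have e4 := fibercount g ((N : Set G) ∩ S₀) (fun h hh => hh.2)
    rw [← e1, Nat.card_congr (e2.trans e3), e4, hk, hcar, Set.inter_comm]
  -- card G = card S₀ * m
  have step2 : Nat.card G = Nat.card S₀ * m := by
    have e5 := fibercount g S₀ (fun h hh => hh)
    rw [← e5]
    exact (Nat.card_congr (Equiv.subtypeUnivEquiv fun x : G =>
      show IsConj g (x * g * x⁻¹) from isConj_iff.mpr ⟨x, rfl⟩)).symm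
  have hNpos : 0 < Nat.card N := Nat.card_pos
  have hS₀pos : 0 < Nat.card S₀ := by
    have : Nonempty S₀ := ⟨⟨g, IsConj.refl g⟩⟩
    exact Nat.card_pos
  -- QC * card S₀ = k * index
  have step3 : QC * Nat.card S₀ = k * N.index := by
    have h4 : QC * Nat.card S₀ * Nat.card N = k * N.index * Nat.card N := by
      calc QC * Nat.card S₀ * Nat.card N = (QC * Nat.card N) * Nat.card S₀ := by ring
      _ = k * m * Nat.card S₀ := by rw [step1]
      _ = k * (Nat.card S₀ * m) := by ring
      _ = k * Nat.card G := by rw [step2]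
      _ = k * (N.index * Nat.card N) := by rw [Subgroup.index_mul_card]
      _ = _ := by ring
    exact Nat.eq_of_mul_eq_mul_right hNpos h4
  rw [hcar]
  rw [eq_div_iff (by exact_mod_cast hS₀pos.ne')]
  exact_mod_cast by rw [step3]; push_cast; ring

private lemma pow_split (n : ℕ) (hn : 1 ≤ n) (x : ℚ) : x ^ n = x ^ (n - 1) * x := by
  conv_lhs => rw [show n = n - 1 + 1 from by omega]
  rw [pow_succ]

private lemma algebra_step (x i k : ℚ) (hx : x ≠ 0) (c : ℕ) (hc : 1 ≤ c) :
    x * (i * k / x) ^ c = i ^ c * (k ^ c / x ^ (c - 1)) := by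
  rw [div_pow, mul_pow, pow_split c hc x]
  have hx1 : x ^ (c - 1) ≠ 0 := pow_ne_zero _ hx
  field_simp

private lemma biUnion_ncard {α β : Type*} [Finite β] (s : Finset α) (f : α → Set β) :
    (⋃ x ∈ s, f x).ncard ≤ ∑ x ∈ s, (f x).ncard := by
  classical
  induction s using Finset.induction_on with
  | empty => simp
  | @insert a s hx ih =>
      rw [Finset.sum_insert hx]
      refine le_trans (le_of_eq (by rw [Finset.set_biUnion_insert])) ?_
      exact le_trans (Set.ncard_union_le _ _) (by omega)

end Aux

set_option maxHeartbeats 1000000 in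
/-- The number of `c`-tuples of cosets in `G/N` whose corresponding intersection of
conjugates of `N` is nontrivial is at most `|G:N|^c` times the sum, over the conjugacy
classes `C` of `G` of elements of prime order, of `|C ∩ N|^c / |C|^(c-1)`. -/
theorem stmt1 {G : Type*} [Group G] [Finite G] (N : Subgroup G) (c : ℕ) (hc : 1 ≤ c) :
    (Nat.card {t : Fin c → G ⧸ N |
        (⨅ i, N.map (MulAut.conj ((t i).out)).toMonoidHom) ≠ ⊥} : ℚ) ≤
      (N.index : ℚ) ^ c *
        ∑ᶠ C ∈ {C : ConjClasses G | ∀ g ∈ C.carrier, (orderOf g).Prime},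
          (Nat.card (C.carrier ∩ (N : Set G) : Set G) : ℚ) ^ c /
            (Nat.card C.carrier : ℚ) ^ (c - 1) := by
  classical
  haveI : Fintype G := Fintype.ofFinite G
  set Scl : Set (ConjClasses G) := {C | ∀ g ∈ C.carrier, (orderOf g).Prime} with hScl
  set F : ConjClasses G → ℚ := fun C =>
    (Nat.card (C.carrier ∩ (N : Set G) : Set G) : ℚ) ^ c /
      (Nat.card C.carrier : ℚ) ^ (c - 1) with hF
  set P : Finset G := {g : G | (orderOf g).Prime}.toFinset with hP
  set A : G → Set (Fin c → G ⧸ N) := fun g =>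
    {t | ∀ i, g ∈ N.map (MulAut.conj ((t i).out)).toMonoidHom} with hA
  -- Step 1 : subset of union
  have hsub : {t : Fin c → G ⧸ N |
      (⨅ i, N.map (MulAut.conj ((t i).out)).toMonoidHom) ≠ ⊥} ⊆ ⋃ g ∈ P, A g := by
    intro t ht
    obtain ⟨g, hg, hgp⟩ := exists_prime_order _ ht
    have hgP : g ∈ P := Set.mem_toFinset.mpr hgp
    exact Set.mem_biUnion hgP (fun i => (Subgroup.mem_iInf.mp hg) i)
  -- Step 2 : Nat card bound
  have h1 : Nat.card {t : Fin c → G ⧸ N |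
      (⨅ i, N.map (MulAut.conj ((t i).out)).toMonoidHom) ≠ ⊥} ≤
      ∑ g ∈ P, Nat.card {q : G ⧸ N // g ∈ N.map (MulAut.conj q.out).toMonoidHom} ^ c := by
    rw [Nat.card_coe_set_eq]
    refine le_trans (Set.ncard_le_ncard hsub (Set.toFinite _)) ?_
    refine le_trans (biUnion_ncard P A) (Finset.sum_le_sum fun g _ => ?_)
    rw [← Nat.card_coe_set_eq]
    apply le_of_eq
    have e : A g ≃ ∀ _ : Fin c, {q : G ⧸ N // g ∈ N.map (MulAut.conj q.out).toMonoidHom} :=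
      Equiv.subtypePiEquivPi (β := fun _ : Fin c => G ⧸ N)
        (p := fun _ q => g ∈ N.map (MulAut.conj (Quotient.out q)).toMonoidHom)
    rw [Nat.card_congr e, Nat.card_pi, Finset.prod_const, Finset.card_univ, Fintype.card_fin]
  -- Step 3: pass to ℚ and rewrite each term
  have h2 : (Nat.card {t : Fin c → G ⧸ N |
      (⨅ i, N.map (MulAut.conj ((t i).out)).toMonoidHom) ≠ ⊥} : ℚ) ≤
      ∑ g ∈ P, ((N.index : ℚ) *
        (Nat.card ((ConjClasses.mk g).carrier ∩ (N : Set G) : Set G) : ℚ) /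
        (Nat.card (ConjClasses.mk g).carrier : ℚ)) ^ c := by
    have h1' : (Nat.card {t : Fin c → G ⧸ N |
        (⨅ i, N.map (MulAut.conj ((t i).out)).toMonoidHom) ≠ ⊥} : ℚ) ≤
        ∑ g ∈ P, (Nat.card {q : G ⧸ N //
          g ∈ N.map (MulAut.conj q.out).toMonoidHom} : ℚ) ^ c := by
      exact_mod_cast h1
    exact le_trans h1' (le_of_eq (Finset.sum_congr rfl fun g _ => by rw [qcard_eq N g]))
  -- Step 4: group by conjugacy classes
  set Fg : ConjClasses G → ℚ := fun C =>
    ((N.index : ℚ) * (Nat.card (C.carrier ∩ (N : Set G) : Set G) : ℚ) /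
      (Nat.card C.carrier : ℚ)) ^ c with hFg
  have h3 : ∑ g ∈ P, Fg (ConjClasses.mk g) =
      ∑ C ∈ P.image ConjClasses.mk, (Nat.card C.carrier : ℚ) * Fg C := by
    rw [Finset.sum_comp Fg ConjClasses.mk]
    refine Finset.sum_congr rfl fun C hC => ?_
    obtain ⟨g₀, hg₀P, hg₀⟩ := Finset.mem_image.mp hC
    have hg₀p : (orderOf g₀).Prime := by simpa [hP] using hg₀P
    have hfil : P.filter (fun a => ConjClasses.mk a = C) = C.carrier.toFinset := by
      ext h
      simp only [Finset.mem_filter, Set.mem_toFinset, hP, Set.mem_toFinset, Set.mem_setOf_eq]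
      constructor
      · rintro ⟨-, hh⟩; rwa [ConjClasses.mem_carrier_iff_mk_eq]
      · intro hh
        exact ⟨prime_class hg₀p (by rw [hg₀]; exact hh),
          ConjClasses.mem_carrier_iff_mk_eq.mp hh⟩
    rw [hfil, nsmul_eq_mul, Set.toFinset_card, Nat.card_eq_fintype_card]
  have h4 : ∀ C ∈ P.image ConjClasses.mk,
      (Nat.card C.carrier : ℚ) * Fg C = (N.index : ℚ) ^ c * F C := by
    intro C hC
    obtain ⟨g₀, hg₀P, hg₀⟩ := Finset.mem_image.mp hC
    have hpos : 0 < Nat.card C.carrier := by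
      have hg₀mem : g₀ ∈ C.carrier := by
        rw [← hg₀]; exact ConjClasses.mem_carrier_iff_mk_eq.mpr rfl
      have : Nonempty C.carrier := ⟨⟨g₀, hg₀mem⟩⟩
      exact Nat.card_pos
    have hQpos : (0 : ℚ) < (Nat.card C.carrier : ℚ) := by exact_mod_cast hpos
    simp only [hFg, hF]
    exact algebra_step _ _ _ hQpos.ne' c hc
  have h5 : ∑ C ∈ P.image ConjClasses.mk, (N.index : ℚ) ^ c * F C ≤
      (N.index : ℚ) ^ c * ∑ᶠ C ∈ Scl, F C := by
    rw [← Finset.mul_sum]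
    refine mul_le_mul_of_nonneg_left ?_ (by positivity)
    have hfs : ∑ᶠ C ∈ Scl, F C = ∑ C ∈ Scl.toFinset, F C := by
      rw [← finsum_mem_coe_finset, Set.coe_toFinset]
    rw [hfs]
    refine Finset.sum_le_sum_of_subset_of_nonneg ?_ (fun C _ _ => by
      simp only [hF]; positivity)
    intro C hC
    obtain ⟨g₀, hg₀P, hg₀⟩ := Finset.mem_image.mp hC
    have hg₀p : (orderOf g₀).Prime := by simpa [hP] using hg₀P
    rw [Set.mem_toFinset]
    intro h hh
    exact prime_class hg₀p (by rw [hg₀]; exact hh)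
  calc (Nat.card {t : Fin c → G ⧸ N |
        (⨅ i, N.map (MulAut.conj ((t i).out)).toMonoidHom) ≠ ⊥} : ℚ)
      ≤ ∑ g ∈ P, Fg (ConjClasses.mk g) := h2
    _ = ∑ C ∈ P.image ConjClasses.mk, (Nat.card C.carrier : ℚ) * Fg C := h3
    _ = ∑ C ∈ P.image ConjClasses.mk, (N.index : ℚ) ^ c * F C :=
        Finset.sum_congr rfl h4
    _ ≤ (N.index : ℚ) ^ c * ∑ᶠ C ∈ Scl, F C := h5
end

section
/- Let G = SL₃(𝔽₂), let P be a Sylow 3-subgroup of G, and let N be the normaliser of P in G. Then N has order 6 and there exists x ∈ G such that N ∩ N^x is the trivial subgroup. -/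
open Pointwise
set_option maxRecDepth 40000
set_option maxHeartbeats 1000000

namespace SL32aux

abbrev G := Matrix.SpecialLinearGroup (Fin 3) (ZMod 2)

instance : DecidableEq G := fun a b => decidable_of_iff (a.1 = b.1) Subtype.ext_iff.symm

instance : Fact (Nat.Prime 3) := ⟨by norm_num⟩

def c : G := ⟨!![0,1,0;0,0,1;1,0,0], by decide⟩

def x₀ : G := ⟨!![0,0,1;0,1,0;1,0,1], by decide⟩

def xi : G := ⟨!![1,0,1;0,1,0;1,0,0], by decide⟩

lemma x₀inv : x₀⁻¹ = xi := inv_eq_of_mul_eq_one_right (by decide)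

def P₀ : Subgroup G where
  carrier := {g | g = 1 ∨ g = c ∨ g = c*c}
  one_mem' := Or.inl rfl
  mul_mem' := by
    rintro a b (rfl|rfl|rfl) (rfl|rfl|rfl) <;> · first
      | exact Or.inl (by decide)
      | exact Or.inr (Or.inl (by decide))
      | exact Or.inr (Or.inr (by decide))
  inv_mem' := by
    rintro a (rfl|rfl|rfl) <;> · first
      | exact Or.inl (by decide)
      | exact Or.inr (Or.inl (by decide))
      | exact Or.inr (Or.inr (by decide))

lemma mem_P₀_iff (g : G) : g ∈ P₀ ↔ (g = 1 ∨ g = c ∨ g = c*c) := Iff.rfl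

instance : DecidablePred (· ∈ P₀) := fun g => decidable_of_iff _ (mem_P₀_iff g).symm

lemma cardG : Nat.card G = 168 := by
  rw [Nat.card_eq_fintype_card]
  decide

lemma P₀_eq_zpowers : P₀ = Subgroup.zpowers c := by
  apply le_antisymm
  · rintro g (rfl|rfl|rfl)
    · exact Subgroup.one_mem _
    · exact Subgroup.mem_zpowers c
    · exact Subgroup.mul_mem _ (Subgroup.mem_zpowers c) (Subgroup.mem_zpowers c)
  · exact Subgroup.zpowers_le.2 (Or.inr (Or.inl rfl))

lemma cardP₀ : Nat.card P₀ = 3 := by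
  rw [P₀_eq_zpowers, Nat.card_zpowers]
  exact orderOf_eq_prime (by decide) (by decide)

lemma factor168 : (Nat.card G).factorization 3 = 1 := by
  rw [cardG]
  have h : (168:ℕ) = 3 * 56 := rfl
  rw [h, Nat.factorization_mul (by norm_num) (by norm_num)]
  simp [Nat.Prime.factorization_self (by norm_num : Nat.Prime 3),
    Nat.factorization_eq_zero_of_not_dvd (by norm_num : ¬ (3:ℕ) ∣ 56)]

def P₀sylow : Sylow 3 G := Sylow.ofCard P₀ (by rw [cardP₀, factor168, pow_one])

def N₀ : Subgroup G := Subgroup.normalizer (P₀ : Set G)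

lemma norm_iff (g : G) : g ∈ N₀ ↔ (g*c = c*g ∨ g*c = c*c*g) := by
  have e1 : g*c*g⁻¹ = c ↔ g*c = c*g := mul_inv_eq_iff_eq_mul
  have e2 : g*c*g⁻¹ = c*c ↔ g*c = c*c*g := mul_inv_eq_iff_eq_mul
  rw [← e1, ← e2]
  constructor
  · intro h
    have hc : c ∈ P₀ := Or.inr (Or.inl rfl)
    rcases (Subgroup.mem_normalizer_iff.mp h c).mp hc with h1 | h1 | h1
    · exfalso
      have h2 : c = 1 := by
        have h3 := congrArg (fun z => g⁻¹ * z * g) h1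
        simpa [mul_assoc] using h3
      exact absurd h2 (by decide)
    · exact Or.inl h1
    · exact Or.inr h1
  · intro h
    rw [N₀, Subgroup.mem_normalizer_iff]
    have key := Subgroup.mem_normalizer_fintype (S := (P₀ : Set G)) (x := g) ?_
    · exact fun n => key n
    · intro n hn
      have hq2 : g * (c*c) * g⁻¹ = (g*c*g⁻¹) * (g*c*g⁻¹) := by group
      rcases hn with rfl | rfl | rfl
      · show g * 1 * g⁻¹ ∈ P₀
        simpa using P₀.one_mem
      · show g * c * g⁻¹ ∈ P₀
        rcases h with h | h <;> rw [h]
        · exact Or.inr (Or.inl rfl)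
        · exact Or.inr (Or.inr rfl)
      · show g * (c*c) * g⁻¹ ∈ P₀
        rw [hq2]
        rcases h with h | h <;> rw [h]
        · exact Or.inr (Or.inr rfl)
        · exact Or.inr (Or.inl (by decide))

instance : DecidablePred (· ∈ N₀) := fun g => decidable_of_iff _ (norm_iff g).symm

lemma cardN₀ : Nat.card N₀ = 6 := by
  rw [Nat.card_eq_fintype_card]
  decide

end SL32aux

namespace SL32aux

lemma inter_bot : N₀ ⊓ conjSubgroup N₀ x₀ = ⊥ := by
  rw [eq_bot_iff]
  intro y hy
  rw [Subgroup.mem_inf] at hy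
  obtain ⟨h1, h2⟩ := hy
  rw [conjSubgroup, Subgroup.mem_map_equiv] at h2
  replace h2 : x₀ * y * xi ∈ N₀ := by
    rw [← x₀inv]
    simpa [MulAut.conj_symm_apply] using h2
  rw [norm_iff] at h1 h2
  rw [Subgroup.mem_bot]
  revert h1 h2
  revert y
  decide

end SL32aux

open SL32aux in
/-- If `N` is the normaliser of a Sylow `3`-subgroup of `G = SL₃(𝔽₂)`, then `|N| = 6`
and `N ∩ N^x = 1` for some `x ∈ G`. -/
theorem stmt6 (P : Sylow 3 (Matrix.SpecialLinearGroup (Fin 3) (ZMod 2)))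
    (N : Subgroup (Matrix.SpecialLinearGroup (Fin 3) (ZMod 2)))
    (hN : N = Subgroup.normalizer ((P : Subgroup (Matrix.SpecialLinearGroup (Fin 3) (ZMod 2))) : Set (Matrix.SpecialLinearGroup (Fin 3) (ZMod 2)))) :
    Nat.card N = 6 ∧
      ∃ x : Matrix.SpecialLinearGroup (Fin 3) (ZMod 2),
        N ⊓ conjSubgroup N x = ⊥ := by
  obtain ⟨g, hg⟩ := MulAction.exists_smul_eq G P₀sylow P
  have hinj : Function.Injective (MulAut.conj g).toMonoidHom := (MulAut.conj g).injective
  have hPcoe : (P : Subgroup G) = P₀.map (MulAut.conj g).toMonoidHom := by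
    rw [← hg]
    ext z
    rw [Sylow.coe_subgroup_smul, Subgroup.mem_pointwise_smul_iff_inv_smul_mem,
      Subgroup.mem_map_equiv]
    rfl
  have hNmap : N = N₀.map (MulAut.conj g).toMonoidHom := by
    rw [hN, hPcoe, ← Subgroup.map_equiv_normalizer_eq]
    rfl
  constructor
  · have hcard := Nat.card_congr (Subgroup.equivMapOfInjective N₀ _ hinj).toEquiv
    rw [hNmap, ← hcard, cardN₀]
  · refine ⟨g * x₀ * g⁻¹, ?_⟩
    have hconj : conjSubgroup (N₀.map (MulAut.conj g).toMonoidHom) (g * x₀ * g⁻¹)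
        = (conjSubgroup N₀ x₀).map (MulAut.conj g).toMonoidHom := by
      have hm : (MulAut.conj (g*x₀*g⁻¹)⁻¹).toMonoidHom.comp (MulAut.conj g).toMonoidHom
          = (MulAut.conj g).toMonoidHom.comp (MulAut.conj x₀⁻¹).toMonoidHom := by
        ext z
        simp only [MonoidHom.comp_apply, MulEquiv.coe_toMonoidHom, MulAut.conj_apply]
        group
      rw [conjSubgroup, conjSubgroup, Subgroup.map_map, Subgroup.map_map, hm]
    rw [hNmap, hconj, ← Subgroup.map_inf _ _ _ hinj, inter_bot, Subgroup.map_bot]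
end

section
/- Let F be a finite field of characteristic 2 with |F| = q ≥ 4, let G = SL₂(F), let T be a cyclic subgroup of G of order q − 1, and let N be the normaliser of T in G. Then there exists x ∈ G such that N ∩ N^x is the trivial subgroup. -/
open Matrix Polynomial

section SL2Proof

variable {F : Type*} [Field F] [Fintype F] [CharP F 2]

local notation "SL2" => Matrix.SpecialLinearGroup (Fin 2) F

/-- The diagonal torus embedding. -/
def torusHom : Fˣ →* Matrix.SpecialLinearGroup (Fin 2) F where
  toFun b := ⟨!![(b : F), 0; 0, ((b : F))⁻¹], by
    simp [Matrix.det_fin_two_of]⟩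
  map_one' := by ext i j <;> fin_cases i <;> fin_cases j <;> simp
  map_mul' x y := by
    ext i j <;> erw [Matrix.SpecialLinearGroup.coe_mul] <;> fin_cases i <;> fin_cases j <;>
      simp [Matrix.mul_apply, Fin.sum_univ_two, mul_comm]

@[simp] lemma torusHom_coe (b : Fˣ) :
    ((torusHom b : SL2) : Matrix (Fin 2) (Fin 2) F) = !![(b : F), 0; 0, ((b : F))⁻¹] := rfl

lemma char2_two_eq_zero : (2 : F) = 0 := CharTwo.two_eq_zero

lemma char2_sq_eq_one {a : F} (h : a * a = 1) : a = 1 := by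
  have htwo : (2 : F) = 0 := char2_two_eq_zero
  have h2 : (a + 1) * (a + 1) = 0 := by linear_combination h + (a + 1) * htwo
  have h3 := mul_self_eq_zero.mp h2
  linear_combination h3 - htwo

/-- monomial matrices: diagonal or antidiagonal -/
def Mono (g : SL2) : Prop :=
  (g 0 1 = 0 ∧ g 1 0 = 0) ∨ (g 0 0 = 0 ∧ g 1 1 = 0)

def uSL : SL2 := ⟨!![1, 1; 0, 1], by simp [Matrix.det_fin_two_of]⟩

lemma uSL_inv : (uSL : SL2)⁻¹ = uSL := by
  have h : (uSL : SL2) * uSL = 1 := by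
    have htwo : (2 : F) = 0 := char2_two_eq_zero
    ext i j
    simp only [Matrix.SpecialLinearGroup.coe_mul]
    fin_cases i <;> fin_cases j <;>
      simp [uSL, Matrix.mul_apply, Matrix.vecMul, dotProduct, Fin.sum_univ_two] <;>
      linear_combination htwo
  exact inv_eq_of_mul_eq_one_right h

lemma mono_of_conj {h : SL2} {bu cu : Fˣ} (hb1 : (bu : F) ≠ 1)
    (hcomm : h * torusHom bu = torusHom cu * h) : Mono h := by
  have hb0 : (bu : F) ≠ 0 := Units.ne_zero bu
  have hbne : (bu : F) ≠ ((bu : F))⁻¹ := by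
    intro hcon
    exact hb1 (char2_sq_eq_one (by field_simp at hcon; linear_combination hcon))
  have hdet : h 0 0 * h 1 1 - h 0 1 * h 1 0 = 1 := by
    have := h.2; rwa [Matrix.det_fin_two] at this
  have E := (Matrix.SpecialLinearGroup.ext_iff _ _).mp hcomm
  have e00 := E 0 0
  have e01 := E 0 1
  have e10 := E 1 0
  have e11 := E 1 1
  simp [Matrix.mul_apply, Fin.sum_univ_two] at e00 e01 e10 e11
  -- e00 : h 0 0 * bu = cu * h 0 0  etc.
  by_cases hc : (cu : F) = (bu : F)
  · left
    constructor
    · rcases mul_eq_zero.mp (show h 0 1 * (((bu:F))⁻¹ - (bu:F)) = 0 by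
        linear_combination e01 + h 0 1 * hc) with h' | h'
      · exact h'
      · exact absurd (sub_eq_zero.mp h').symm hbne
    · rcases mul_eq_zero.mp (show h 1 0 * ((bu:F) - ((bu:F))⁻¹) = 0 by
        have hcinv : ((cu:F))⁻¹ = ((bu:F))⁻¹ := by rw [hc]
        linear_combination e10 + h 1 0 * hcinv) with h' | h'
      · exact h'
      · exact absurd (sub_eq_zero.mp h') hbne
  · by_cases hc2 : (cu : F) = ((bu : F))⁻¹
    · right
      constructor
      · rcases mul_eq_zero.mp (show h 0 0 * ((bu:F) - ((bu:F))⁻¹) = 0 by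
          linear_combination e00 + h 0 0 * hc2) with h' | h'
        · exact h'
        · exact absurd (sub_eq_zero.mp h') hbne
      · have hcinv : ((cu:F))⁻¹ = (bu:F) := by rw [hc2, inv_inv]
        rcases mul_eq_zero.mp (show h 1 1 * (((bu:F))⁻¹ - (bu:F)) = 0 by
          linear_combination e11 + h 1 1 * hcinv) with h' | h'
        · exact h'
        · exact absurd (sub_eq_zero.mp h').symm hbne
    · exfalso
      have h00 : h 0 0 = 0 := by
        rcases mul_eq_zero.mp (show h 0 0 * ((bu:F) - (cu:F)) = 0 by
          linear_combination e00) with h' | h'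
        · exact h'
        · exact absurd (sub_eq_zero.mp h').symm hc
      have h01 : h 0 1 = 0 := by
        rcases mul_eq_zero.mp (show h 0 1 * (((bu:F))⁻¹ - (cu:F)) = 0 by
          linear_combination e01) with h' | h'
        · exact h'
        · exact absurd (sub_eq_zero.mp h').symm hc2
      rw [h00, h01] at hdet
      simp at hdet

lemma eq_one_of_mono {h : SL2} (H1 : Mono h) (H2 : Mono (uSL * h * uSL⁻¹)) :
    h = 1 := by
  have htwo : (2 : F) = 0 := char2_two_eq_zero
  have hdet : h 0 0 * h 1 1 - h 0 1 * h 1 0 = 1 := by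
    have := h.2; rwa [Matrix.det_fin_two] at this
  rw [uSL_inv] at H2
  have n00 : ((uSL * h * uSL : SL2) 0 0 :) = h 0 0 + h 1 0 := by
    rw [Matrix.SpecialLinearGroup.coe_mul, Matrix.SpecialLinearGroup.coe_mul]; simp [uSL, Matrix.mul_apply, Matrix.vecMul, dotProduct, Fin.sum_univ_two]
  have n01 : ((uSL * h * uSL : SL2) 0 1 :) = h 0 0 + h 0 1 + h 1 0 + h 1 1 := by
    rw [Matrix.SpecialLinearGroup.coe_mul, Matrix.SpecialLinearGroup.coe_mul]; simp [uSL, Matrix.mul_apply, Matrix.vecMul, dotProduct, Fin.sum_univ_two]; ring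
  have n10 : ((uSL * h * uSL : SL2) 1 0 :) = h 1 0 := by
    rw [Matrix.SpecialLinearGroup.coe_mul, Matrix.SpecialLinearGroup.coe_mul]; simp [uSL, Matrix.mul_apply, Matrix.vecMul, dotProduct, Fin.sum_univ_two]
  have n11 : ((uSL * h * uSL : SL2) 1 1 :) = h 1 0 + h 1 1 := by
    rw [Matrix.SpecialLinearGroup.coe_mul, Matrix.SpecialLinearGroup.coe_mul]; simp [uSL, Matrix.mul_apply, Matrix.vecMul, dotProduct, Fin.sum_univ_two]
  rcases H1 with ⟨h01, h10⟩ | ⟨h00, h11⟩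
  · rcases H2 with ⟨m01, _⟩ | ⟨m00, m11⟩
    · rw [n01, h01, h10] at m01
      -- h00 + h11 = 0
      have h0011 : h 0 0 = h 1 1 := by linear_combination m01 - h 1 1 * htwo
      have hsq : h 0 0 * h 0 0 = 1 := by
        linear_combination hdet + h 0 0 * h0011 + h 1 0 * h01
      have h1 : h 0 0 = 1 := char2_sq_eq_one hsq
      ext i j
      fin_cases i <;> fin_cases j <;>
        simp [h01, h10, h1, ← h0011, Matrix.one_apply]
    · exfalso
      rw [n00, h10, add_zero] at m00
      rw [n11, h10, zero_add] at m11
      rw [h01, h10, m00, m11] at hdet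
      simp at hdet
  · exfalso
    have hne : h 1 0 ≠ 0 := by
      intro h'
      rw [h00, h11, h'] at hdet; simp at hdet
    rcases H2 with ⟨_, m10⟩ | ⟨m00, _⟩
    · rw [n10] at m10; exact hne m10
    · rw [n00, h00, zero_add] at m00; exact hne m00

lemma exists_eigen (M : Matrix (Fin 2) (Fin 2) F) (hdet : M.det = 1)
    (hq : 4 ≤ Fintype.card F)
    (hpow : M ^ (Fintype.card F - 1) = 1) (hM2 : M * M ≠ 1) :
    ∃ a : F, a ≠ 0 ∧ a ≠ 1 ∧ a * a - (M 0 0 + M 1 1) * a + 1 = 0 := by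
  classical
  set q := Fintype.card F with hqdef
  let K := AlgebraicClosure F
  let f : F →+* K := algebraMap F K
  have hfinj : Function.Injective f := f.injective
  have hdet' : M 0 0 * M 1 1 - M 0 1 * M 1 0 = 1 := by
    rwa [Matrix.det_fin_two] at hdet
  -- a root of the characteristic polynomial over K
  obtain ⟨lam, hlam⟩ : ∃ lam : K,
      lam * lam - f (M 0 0 + M 1 1) * lam + 1 = 0 := by
    obtain ⟨lam, hlam⟩ := IsAlgClosed.exists_root
      (C 1 * X ^ 2 + C (-(f (M 0 0 + M 1 1))) * X + C 1)
      (by rw [Polynomial.degree_quadratic one_ne_zero]; exact two_ne_zero)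
    refine ⟨lam, ?_⟩
    have h := hlam
    simp only [Polynomial.IsRoot, Polynomial.eval_add, Polynomial.eval_mul,
      Polynomial.eval_pow, Polynomial.eval_C, Polynomial.eval_X] at h
    linear_combination h
  set A : Matrix (Fin 2) (Fin 2) K := M.map f with hA
  have hdetK : f (M 0 0) * f (M 1 1) - f (M 0 1) * f (M 1 0) = 1 := by
    have h := congrArg f hdet'
    rw [map_sub f, _root_.map_mul f, _root_.map_mul f, map_one f] at h
    exact h
  have hsing : (A - lam • 1).det = 0 := by
    rw [Matrix.det_fin_two]
    simp only [Matrix.sub_apply, Matrix.smul_apply, Matrix.one_apply, hA, Matrix.map_apply]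
    simp only [Fin.zero_eta, Fin.mk_one, if_true, if_false, eq_self_iff_true,
      Fin.one_eq_zero_iff, Fin.zero_eq_one_iff, smul_eq_mul, mul_one, mul_zero,
      Nat.succ_ne_self, if_neg, one_ne_zero, zero_ne_one]
    rw [map_add] at hlam
    linear_combination hlam + hdetK
  obtain ⟨v, hv0, hv⟩ := Matrix.exists_mulVec_eq_zero_iff.mpr hsing
  have hAv : A.mulVec v = lam • v := by
    have h2 : A.mulVec v - lam • v = 0 := by
      rwa [Matrix.sub_mulVec, Matrix.smul_mulVec, Matrix.one_mulVec] at hv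
    exact sub_eq_zero.mp h2
  have hpow_v : ∀ n : ℕ, (A ^ n).mulVec v = lam ^ n • v := by
    intro n
    induction n with
    | zero => simp [Matrix.one_mulVec]
    | succ n ih =>
      rw [pow_succ, ← Matrix.mulVec_mulVec, hAv, Matrix.mulVec_smul, ih,
        smul_smul, pow_succ, mul_comm]
  have hApow : A ^ (q - 1) = 1 := by
    rw [hA, show M.map (f : F →+* K) = f.mapMatrix M from rfl, ← map_pow, hpow, _root_.map_one f.mapMatrix]
  have hlampow : lam ^ (q - 1) = 1 := by
    have h1 := hpow_v (q - 1)
    rw [hApow, Matrix.one_mulVec] at h1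
    obtain ⟨i, hi⟩ := Function.ne_iff.mp hv0
    have h2 := congrFun h1 i
    simp only [Pi.smul_apply, smul_eq_mul] at h2
    have h3 : (lam ^ (q - 1) - 1) * v i = 0 := by linear_combination -h2
    rcases mul_eq_zero.mp h3 with h' | h'
    · exact sub_eq_zero.mp h'
    · exact absurd h' hi
  have hq1 : 1 < q := by omega
  have hlam0 : lam ≠ 0 := by
    intro h'
    rw [h', zero_pow (by omega : q - 1 ≠ 0)] at hlampow
    exact zero_ne_one hlampow
  have hlamq : lam ^ q = lam := by
    have : q - 1 + 1 = q := by omega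
    calc lam ^ q = lam ^ (q - 1) * lam := by rw [← pow_succ, this]
    _ = lam := by rw [hlampow, one_mul]
  -- descend lam to F
  set P : F[X] := X ^ q - X with hP
  have hPdeg : P.natDegree = q := FiniteField.X_pow_card_sub_X_natDegree_eq F hq1
  have hProots : P.roots = Finset.univ.val := FiniteField.roots_X_pow_card_sub_X F
  have hcard : Multiset.card P.roots = P.natDegree := by
    rw [hProots, hPdeg, ← Finset.card_def, Finset.card_univ]
  have hmaproots := Polynomial.roots_map_of_injective_of_card_eq_natDegree
    (f := f) hfinj hcard
  have hlam_root : lam ∈ (P.map f).roots := by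
    rw [Polynomial.mem_roots ((Polynomial.map_ne_zero_iff hfinj).mpr
      (FiniteField.X_pow_card_sub_X_ne_zero F hq1))]
    show Polynomial.IsRoot _ lam
    simp only [hP, Polynomial.map_sub, Polynomial.map_pow, Polynomial.map_X,
        Polynomial.IsRoot, Polynomial.eval_sub, Polynomial.eval_pow, Polynomial.eval_X]
    rw [hlamq, sub_self]
  rw [← hmaproots] at hlam_root
  obtain ⟨a, _, ha⟩ := Multiset.mem_map.mp hlam_root
  refine ⟨a, ?_, ?_, ?_⟩
  · intro h'
    rw [h', map_zero] at ha
    exact hlam0 ha.symm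
  · intro h'
    -- then trace = 0 and M * M = 1, contradiction
    rw [h'] at ha
    have hf1 : f 1 = 1 := f.map_one
    have h2 := hlam
    rw [← ha, hf1] at h2
    have htr : M 0 0 + M 1 1 = 0 := by
      apply hfinj
      rw [map_zero]
      have h2K : ((2 : ℕ) : K) = 0 := CharP.cast_eq_zero K 2
      have h2K' : (2 : K) = 0 := by exact_mod_cast h2K
      linear_combination -h2 + h2K'
    have htwo : (2 : F) = 0 := char2_two_eq_zero
    apply hM2
    ext i j
    fin_cases i <;> fin_cases j <;>
      simp [Matrix.mul_apply, Fin.sum_univ_two, Matrix.one_apply] <;>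
      first
        | linear_combination M 0 0 * htr - hdet' - htwo
        | linear_combination M 0 1 * htr
        | linear_combination M 1 0 * htr
        | linear_combination M 1 1 * htr - hdet' - htwo
  · apply hfinj
    rw [map_add, map_sub, _root_.map_mul f, _root_.map_mul f, map_add, ha, f.map_one, f.map_zero]
    linear_combination hlam + lam * _root_.map_add f (M 0 0) (M 1 1)

lemma a_sub_inv_ne {a : F} (ha0 : a ≠ 0) (ha1 : a ≠ 1) : a - a⁻¹ ≠ 0 := by
  intro h
  apply ha1
  apply char2_sq_eq_one
  have h2 : a = a⁻¹ := sub_eq_zero.mp h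
  calc a * a = a * a⁻¹ := by nth_rewrite 2 [h2]; rfl
  _ = 1 := mul_inv_cancel₀ ha0

lemma exists_conj (M : SL2) (a : F) (ha0 : a ≠ 0) (ha1 : a ≠ 1)
    (hroot : a * a - (M 0 0 + M 1 1) * a + 1 = 0) :
    ∃ Q : SL2, M * Q = Q * torusHom (Units.mk0 a ha0) := by
  have htwo : (2 : F) = 0 := char2_two_eq_zero
  have hdet' : M 0 0 * M 1 1 - M 0 1 * M 1 0 = 1 := by
    have := M.2; rwa [Matrix.det_fin_two] at this
  have hai : a * a⁻¹ = 1 := mul_inv_cancel₀ ha0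
  have hab : a - a⁻¹ ≠ 0 := a_sub_inv_ne ha0 ha1
  have hba : a⁻¹ - a ≠ 0 := fun h => hab (by linear_combination -h)
  have hbroot : a⁻¹ * a⁻¹ - (M 0 0 + M 1 1) * a⁻¹ + 1 = 0 := by
    linear_combination (a⁻¹ * a⁻¹) * hroot + ((M 0 0 + M 1 1) * a⁻¹ - a * a⁻¹ - 1) * hai
  rcases eq_or_ne (M 1 0) 0 with hs | hs
  · have hpw : M 0 0 * M 1 1 = 1 := by linear_combination hdet' + M 0 1 * hs
    have hfact : (a - M 0 0) * (a - M 1 1) = 0 := by linear_combination hroot + hpw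
    rcases eq_or_ne (M 0 1) 0 with hr | hr
    · -- diagonal M
      rcases mul_eq_zero.mp hfact with h1 | h1
      · have hp : M 0 0 = a := (sub_eq_zero.mp h1).symm
        have hw : M 1 1 = a⁻¹ := by
          have h3 : a * M 1 1 = 1 := by rw [← hp]; exact hpw
          exact (inv_eq_of_mul_eq_one_right h3).symm
        refine ⟨1, ?_⟩
        rw [mul_one, one_mul]
        ext i j
        fin_cases i <;> fin_cases j <;>
          simp [Matrix.mul_apply, Fin.sum_univ_two] <;>
          first
            | linear_combination hp
            | linear_combination hr
            | linear_combination hs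
            | linear_combination hw
      · have hw : M 1 1 = a := (sub_eq_zero.mp h1).symm
        have hp : M 0 0 = a⁻¹ := by
          have h3 : M 0 0 * a = 1 := by rw [← hw]; exact hpw
          exact eq_inv_of_mul_eq_one_left h3
        refine ⟨⟨!![0, 1; 1, 0], by rw [Matrix.det_fin_two_of]; linear_combination -htwo⟩, ?_⟩
        ext i j
        erw [Matrix.SpecialLinearGroup.coe_mul, Matrix.SpecialLinearGroup.coe_mul]
        fin_cases i <;> fin_cases j <;>
          simp [Matrix.mul_apply, Fin.sum_univ_two] <;>
          first
            | linear_combination hp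
            | linear_combination hr
            | linear_combination hs
            | linear_combination hw
    · -- s = 0, r ≠ 0 : upper triangular
      rcases mul_eq_zero.mp hfact with h1 | h1
      · have hp : M 0 0 = a := (sub_eq_zero.mp h1).symm
        have hw : M 1 1 = a⁻¹ := by
          have h3 : a * M 1 1 = 1 := by rw [← hp]; exact hpw
          exact (inv_eq_of_mul_eq_one_right h3).symm
        refine ⟨⟨!![1, (a⁻¹ - a)⁻¹ * M 0 1; 0, (a⁻¹ - a)⁻¹ * (a⁻¹ - a)], by
          rw [Matrix.det_fin_two_of, mul_zero, sub_zero, one_mul, inv_mul_cancel₀ hba]⟩, ?_⟩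
        ext i j
        erw [Matrix.SpecialLinearGroup.coe_mul, Matrix.SpecialLinearGroup.coe_mul]
        fin_cases i <;> fin_cases j <;>
          simp [Matrix.mul_apply, Fin.sum_univ_two] <;>
          first
            | linear_combination hp
            | linear_combination hs
            | linear_combination ((a⁻¹ - a)⁻¹ * M 0 1) * hp
            | linear_combination ((a⁻¹ - a)⁻¹ * M 0 1) * hs +
                ((a⁻¹ - a)⁻¹ * (a⁻¹ - a)) * hw
      · have hw : M 1 1 = a := (sub_eq_zero.mp h1).symm
        have hp : M 0 0 = a⁻¹ := by
          have h3 : M 0 0 * a = 1 := by rw [← hw]; exact hpw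
          exact eq_inv_of_mul_eq_one_left h3
        refine ⟨⟨!![(a - a⁻¹)⁻¹ * M 0 1, 1; (a - a⁻¹)⁻¹ * (a - a⁻¹), 0], by
          rw [Matrix.det_fin_two_of, mul_zero, inv_mul_cancel₀ hab, mul_one]
          linear_combination -htwo⟩, ?_⟩
        ext i j
        erw [Matrix.SpecialLinearGroup.coe_mul, Matrix.SpecialLinearGroup.coe_mul]
        fin_cases i <;> fin_cases j <;>
          simp [Matrix.mul_apply, Fin.sum_univ_two] <;>
          first
            | linear_combination hp
            | linear_combination hs
            | linear_combination ((a - a⁻¹)⁻¹ * M 0 1) * hp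
            | linear_combination ((a - a⁻¹)⁻¹ * M 0 1) * hs +
                ((a - a⁻¹)⁻¹ * (a - a⁻¹)) * hw
  · -- s ≠ 0
    have hcne : M 1 0 * (a - a⁻¹) ≠ 0 := mul_ne_zero hs hab
    have hc : M 1 0 * (a - a⁻¹) * (M 1 0 * (a - a⁻¹))⁻¹ = 1 := mul_inv_cancel₀ hcne
    refine ⟨⟨!![a - M 1 1, (M 1 0 * (a - a⁻¹))⁻¹ * (a⁻¹ - M 1 1);
               M 1 0, (M 1 0 * (a - a⁻¹))⁻¹ * M 1 0], by
      rw [Matrix.det_fin_two_of]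
      linear_combination hc⟩, ?_⟩
    ext i j
    erw [Matrix.SpecialLinearGroup.coe_mul, Matrix.SpecialLinearGroup.coe_mul]
    fin_cases i <;> fin_cases j <;>
      simp [Matrix.mul_apply, Fin.sum_univ_two]
    · linear_combination (-1 : F) * hroot - hdet'
    · linear_combination (-(a - a⁻¹)⁻¹ * ((M 1 0 : F))⁻¹ : F) * hbroot -
        (a - a⁻¹)⁻¹ * ((M 1 0 : F))⁻¹ * hdet'
    · ring
    · ring

lemma main_aux (hq : 4 ≤ Fintype.card F)
    (T : Subgroup (Matrix.SpecialLinearGroup (Fin 2) F))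
    (hT : IsCyclic T) (hTcard : Nat.card T = Fintype.card F - 1) :
    ∃ x : Matrix.SpecialLinearGroup (Fin 2) F,
      Subgroup.normalizer (T : Set (Matrix.SpecialLinearGroup (Fin 2) F)) ⊓ ((Subgroup.normalizer (T : Set (Matrix.SpecialLinearGroup (Fin 2) F))).map (MulAut.conj x⁻¹).toMonoidHom) = ⊥ := by
  classical
  obtain ⟨t, ht⟩ := hT
  set M : SL2 := (t : SL2) with hMdef
  have horder : orderOf M = Fintype.card F - 1 := by
    rw [hMdef, Subgroup.orderOf_coe, orderOf_eq_card_of_forall_mem_zpowers ht]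
    exact hTcard
  have hTz : T = Subgroup.zpowers M := by
    apply le_antisymm
    · intro x hx
      obtain ⟨k, hk⟩ := Subgroup.mem_zpowers_iff.mp (ht ⟨x, hx⟩)
      exact Subgroup.mem_zpowers_iff.mpr
        ⟨k, by rw [hMdef, ← SubgroupClass.coe_zpow, hk]⟩
    · exact (Subgroup.zpowers_le).mpr t.2
  have hMq : M ^ (Fintype.card F - 1) = 1 := by
    rw [← horder]; exact pow_orderOf_eq_one M
  have hM2 : M * M ≠ 1 := by
    intro h
    have h2 : orderOf M ∣ 2 := orderOf_dvd_of_pow_eq_one (by rwa [pow_two])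
    rw [horder] at h2
    have := Nat.le_of_dvd (by norm_num) h2
    omega
  have hMq' : (M : Matrix (Fin 2) (Fin 2) F) ^ (Fintype.card F - 1) = 1 := by
    have := congrArg (fun z : SL2 => (z : Matrix (Fin 2) (Fin 2) F)) hMq
    simpa using this
  have hM2' : (M : Matrix (Fin 2) (Fin 2) F) * (M : Matrix (Fin 2) (Fin 2) F) ≠ 1 := by
    intro h
    exact hM2 (Subtype.ext (by simpa using h))
  obtain ⟨a, ha0, ha1, hroot⟩ := exists_eigen (M : Matrix (Fin 2) (Fin 2) F) M.2 hq hMq' hM2'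
  obtain ⟨Q, hQ⟩ := exists_conj M a ha0 ha1 hroot
  set au : Fˣ := Units.mk0 a ha0 with haudef
  have hau1 : (au : F) ≠ 1 := ha1
  -- key conversion
  have convert : ∀ n : SL2, (∃ k : ℤ, n * M = M ^ k * n) → Mono (Q⁻¹ * n * Q) := by
    rintro n ⟨k, hk⟩
    have h1 : Q⁻¹ * M * Q = torusHom au := by
      rw [mul_assoc, hQ, ← mul_assoc, inv_mul_cancel, one_mul]
    have h2 : Q⁻¹ * M ^ k * Q = torusHom (au ^ k) := by
      rw [map_zpow, ← h1]
      rw [show Q⁻¹ * M * Q = Q⁻¹ * M * (Q⁻¹)⁻¹ by rw [inv_inv], conj_zpow, inv_inv]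
    apply mono_of_conj (bu := au) (cu := au ^ k) hau1
    calc (Q⁻¹ * n * Q) * torusHom au
        = Q⁻¹ * (n * M) * Q := by rw [← h1]; group
      _ = Q⁻¹ * (M ^ k * n) * Q := by rw [hk]
      _ = torusHom (au ^ k) * (Q⁻¹ * n * Q) := by rw [← h2]; group
  have kex : ∀ n : SL2, n ∈ Subgroup.normalizer (T : Set SL2) → ∃ k : ℤ, n * M = M ^ k * n := by
    intro n hn
    have hMT : M ∈ T := by rw [hTz]; exact Subgroup.mem_zpowers M
    have h3 : n * M * n⁻¹ ∈ T := (Subgroup.mem_normalizer_iff.mp hn M).mp hMT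
    rw [hTz] at h3
    obtain ⟨k, hk⟩ := Subgroup.mem_zpowers_iff.mp h3
    refine ⟨k, ?_⟩
    rw [hk]
    group
  refine ⟨Q * uSL * Q⁻¹, ?_⟩
  rw [eq_bot_iff]
  intro g hg
  rw [Subgroup.mem_inf] at hg
  obtain ⟨hg1, hg2⟩ := hg
  have Hg : Mono (Q⁻¹ * g * Q) := convert g (kex g hg1)
  obtain ⟨n, hn, hng⟩ := hg2
  have hng' : (Q * uSL * Q⁻¹)⁻¹ * n * (Q * uSL * Q⁻¹) = g := by
    simpa [MulAut.conj_apply, mul_assoc] using hng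
  have Hn : Mono (Q⁻¹ * n * Q) := convert n (kex n hn)
  have hrel : Q⁻¹ * n * Q = uSL * (Q⁻¹ * g * Q) * uSL⁻¹ := by
    rw [← hng']
    group
  rw [hrel] at Hn
  have hone : Q⁻¹ * g * Q = 1 := eq_one_of_mono Hg Hn
  have hgone : g = 1 := by
    have h4 : Q * (Q⁻¹ * g * Q) * Q⁻¹ = Q * 1 * Q⁻¹ := by rw [hone]
    simpa [mul_assoc] using h4
  simp [hgone]

end SL2Proof

/-- Let `F` be a finite field of characteristic `2` with `|F| = q ≥ 4`, let
`G = SL₂(F)`, let `T ≤ G` be cyclic of order `q - 1` and let `N` be the normaliser of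
`T` in `G`. Then `N ∩ N^x = 1` for some `x ∈ G`. -/
theorem stmt9 {F : Type*} [Field F] [Fintype F] [CharP F 2]
    (hq : 4 ≤ Fintype.card F)
    (T : Subgroup (Matrix.SpecialLinearGroup (Fin 2) F))
    (hT : IsCyclic T) (hTcard : Nat.card T = Fintype.card F - 1) :
    ∃ x : Matrix.SpecialLinearGroup (Fin 2) F,
      Subgroup.normalizer (T : Set (Matrix.SpecialLinearGroup (Fin 2) F)) ⊓
        conjSubgroup (Subgroup.normalizer (T : Set (Matrix.SpecialLinearGroup (Fin 2) F))) x = ⊥ := by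
  exact main_aux hq T hT hTcard
end

section
/- Let n ≥ 3, let G = SLₙ(𝔽₂), and let N be the subgroup of G consisting of all permutation matrices (matrices having exactly one entry equal to 1 in each row and each column and all other entries 0). Then there exists x ∈ G such that N ∩ N^x is the trivial subgroup. -/
private lemma le_apply_fin {n : ℕ} {f : Fin n → Fin n} (hf : StrictMono f) : ∀ i, i ≤ f i := by
  by_contra! H
  obtain ⟨i, hi⟩ := H
  obtain ⟨m, hm, hmin⟩ := Finset.exists_min_image (Finset.univ.filter fun j => f j < j) id
    ⟨i, Finset.mem_filter.mpr ⟨Finset.mem_univ i, hi⟩⟩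
  have hm' : f m < m := (Finset.mem_filter.mp hm).2
  have : f m ∈ Finset.univ.filter fun j => f j < j :=
    Finset.mem_filter.mpr ⟨Finset.mem_univ _, hf hm'⟩
  exact absurd hm' (not_lt.mpr (hmin _ this))

private lemma perm_col {n : ℕ} (A : Matrix (Fin n) (Fin n) (ZMod 2))
    (hrow : ∀ i, ∃! j, A i j = 1) (hcol : ∀ j, ∃! i, A i j = 1)
    (h01 : ∀ i j, A i j = 0 ∨ A i j = 1) :
    ∃ g : Fin n → Fin n, Function.Injective g ∧
      ∀ i j, A i j = if i = g j then 1 else 0 := by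
  refine ⟨fun j => (hcol j).choose, ?_, ?_⟩
  · intro j j' h
    have h1 : A ((hcol j).choose) j = 1 := (hcol j).choose_spec.1
    have h2 : A ((hcol j).choose) j' = 1 := by
      show A ((hcol j).choose) j' = 1
      rw [show (hcol j).choose = (hcol j').choose from h]
      exact (hcol j').choose_spec.1
    exact (hrow ((hcol j).choose)).unique h1 h2
  · intro i j
    by_cases h : i = (hcol j).choose
    · simp only [h, if_pos rfl]
      exact (hcol j).choose_spec.1
    · rw [if_neg h]
      rcases h01 i j with h0 | h1
      · exact h0
      · exact absurd ((hcol j).unique h1 (hcol j).choose_spec.1) h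

private lemma perm_row {n : ℕ} (B : Matrix (Fin n) (Fin n) (ZMod 2))
    (hrow : ∀ i, ∃! j, B i j = 1) (hcol : ∀ j, ∃! i, B i j = 1)
    (h01 : ∀ i j, B i j = 0 ∨ B i j = 1) :
    ∃ f : Fin n → Fin n, Function.Injective f ∧
      ∀ i j, B i j = if j = f i then 1 else 0 := by
  obtain ⟨g, hg, hA⟩ := perm_col B.transpose (fun i => hcol i) (fun j => hrow j)
    (fun i j => h01 j i)
  exact ⟨g, hg, fun i j => hA j i⟩

/-- Let `n ≥ 3`, let `G = SLₙ(𝔽₂)` and let `N ≤ G` be the subgroup of permutation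
matrices, i.e. the matrices with exactly one entry `1` in each row and each column and
all other entries `0`. Then `N ∩ N^x = 1` for some `x ∈ G`. -/
theorem stmt19 (n : ℕ) (hn : 3 ≤ n)
    (N : Subgroup (Matrix.SpecialLinearGroup (Fin n) (ZMod 2)))
    (hN : ∀ A : Matrix.SpecialLinearGroup (Fin n) (ZMod 2),
      A ∈ N ↔
        ((∀ i, ∃! j, (A : Matrix (Fin n) (Fin n) (ZMod 2)) i j = 1) ∧
          (∀ j, ∃! i, (A : Matrix (Fin n) (Fin n) (ZMod 2)) i j = 1) ∧
          (∀ i j, (A : Matrix (Fin n) (Fin n) (ZMod 2)) i j = 0 ∨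
            (A : Matrix (Fin n) (Fin n) (ZMod 2)) i j = 1))) :
    ∃ x : Matrix.SpecialLinearGroup (Fin n) (ZMod 2),
      N ⊓ conjSubgroup N x = ⊥ := by
  set M : Matrix (Fin n) (Fin n) (ZMod 2) :=
    Matrix.of fun i j => if i ≤ j then 1 else 0 with hM
  have hdet : M.det = 1 := by
    rw [Matrix.det_of_upperTriangular]
    · simp [hM]
    · intro i j h
      simp only [hM, Matrix.of_apply, id] at *
      rw [if_neg (not_le.mpr h)]
  set x : Matrix.SpecialLinearGroup (Fin n) (ZMod 2) := ⟨M, hdet⟩ with hx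
  refine ⟨x, ?_⟩
  rw [Subgroup.eq_bot_iff_forall]
  intro A hA
  obtain ⟨hAN, hAc⟩ := hA
  obtain ⟨B, hBN, hBA⟩ := hAc
  -- hBA : (MulAut.conj x⁻¹) B = A, i.e. x⁻¹ * B * x = A, so x * A = B * x
  have hxA : x * A = B * x := by
    rw [← hBA]
    simp only [MulEquiv.coe_toMonoidHom, MulAut.conj_apply]
    group
  have hmat : M * (A : Matrix (Fin n) (Fin n) (ZMod 2))
      = (B : Matrix (Fin n) (Fin n) (ZMod 2)) * M := by
    have := congrArg (fun y : Matrix.SpecialLinearGroup (Fin n) (ZMod 2) =>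
      (y : Matrix (Fin n) (Fin n) (ZMod 2))) hxA
    exact this
  obtain ⟨hArow, hAcol, hA01⟩ := (hN A).mp hAN
  obtain ⟨hBrow, hBcol, hB01⟩ := (hN B).mp hBN
  obtain ⟨g, hginj, hgA⟩ := perm_col _ hArow hAcol hA01
  obtain ⟨f, hfinj, hfB⟩ := perm_row _ hBrow hBcol hB01
  -- entrywise: if i ≤ g j then 1 else 0 = if f i ≤ j then 1 else 0
  have key : ∀ i j : Fin n, (i ≤ g j ↔ f i ≤ j) := by
    intro i j
    have h1 : (M * (A : Matrix (Fin n) (Fin n) (ZMod 2))) i j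
        = if i ≤ g j then 1 else 0 := by
      simp only [Matrix.mul_apply, hgA, hM, Matrix.of_apply, mul_ite, mul_one, mul_zero,
        ite_and]
      rw [Finset.sum_ite_eq' Finset.univ (g j) (fun k => if i ≤ k then (1 : ZMod 2) else 0)]
      simp
    have h2 : ((B : Matrix (Fin n) (Fin n) (ZMod 2)) * M) i j
        = if f i ≤ j then 1 else 0 := by
      simp only [Matrix.mul_apply, hfB, hM, Matrix.of_apply, ite_mul, one_mul, zero_mul]
      rw [Finset.sum_ite_eq' Finset.univ (f i) (fun k => if k ≤ j then (1 : ZMod 2) else 0)]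
      simp
    have := h1.symm.trans ((congrFun (congrFun hmat i) j).trans h2)
    by_cases hij : i ≤ g j <;> by_cases hfij : f i ≤ j <;>
      simp [hij, hfij] at this ⊢
  have hfmono : Monotone f := by
    intro i i' hii'
    have h1 : i' ≤ g (f i') := (key i' (f i')).mpr le_rfl
    exact (key i (f i')).mp (hii'.trans h1)
  have hgmono : Monotone g := by
    intro j j' hjj'
    have h1 : f (g j) ≤ j := (key (g j) j).mp le_rfl
    exact (key (g j) j').mpr (h1.trans hjj')
  have hfs : StrictMono f := hfmono.strictMono_of_injective hfinj
  have hgs : StrictMono g := hgmono.strictMono_of_injective hginj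
  have hgid : ∀ j, g j = j := by
    intro j
    have h1 : f (g j) ≤ j := (key (g j) j).mp le_rfl
    have h2 : g j ≤ f (g j) := le_apply_fin hfs (g j)
    exact le_antisymm (h2.trans h1) (le_apply_fin hgs j)
  have : (A : Matrix (Fin n) (Fin n) (ZMod 2)) = 1 := by
    ext i j
    rw [hgA i j, hgid j, Matrix.one_apply]
  exact Subtype.ext (by rw [this]; rfl)
end
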